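/- arXiv:1906.07075 — 2 statements merged into one kernel-verified Lean document; each statement's English description precedes it below -/
import Mathlib

section
/- For 0 < a < b < 2π and any z in the open unit disk, ∫_a^b (e^{iθ} + z)/(e^{iθ} − z) dθ = (b − a) + 2i · Log((1 − z e^{−ia})/(1 − z e^{−ib})), where Log denotes the principal branch of the logarithm (more precisely, any branch continuous on the disk with value 0 at z = 0). -/
open Complex Real

lemma log_div_pos_re {u v : ℂ} (hu : 0 < u.re) (hv : 0 < v.re) :
    Complex.log (u / v) = Complex.log u - Complex.log v := by
  have hu0 : u ≠ 0 := fun h => by simp [h] at hu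
  have hv0 : v ≠ 0 := fun h => by simp [h] at hv
  have hau : |arg u| < π / 2 := Complex.abs_arg_lt_pi_div_two_iff.mpr (Or.inl hu)
  have hav : |arg v| < π / 2 := Complex.abs_arg_lt_pi_div_two_iff.mpr (Or.inl hv)
  have hvπ : arg v ≠ π := by
    intro h
    rw [h] at hav
    nlinarith [Real.pi_pos, abs_nonneg (arg v), le_abs_self π]
  have hinv : arg v⁻¹ = -arg v := by rw [Complex.arg_inv, if_neg hvπ]
  have hmem : arg u + arg v⁻¹ ∈ Set.Ioc (-π) π := by
    rw [hinv]
    constructor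
    · nlinarith [abs_lt.mp hau, abs_lt.mp hav, Real.pi_pos]
    · nlinarith [abs_lt.mp hau, abs_lt.mp hav, Real.pi_pos]
  rw [div_eq_mul_inv, Complex.log_mul hu0 (inv_ne_zero hv0) hmem,
    Complex.log_inv v hvπ, sub_eq_add_neg]

/-- For `0 < a < b < 2π` and `z` in the open unit disk,
`∫_a^b (e^{iθ} + z)/(e^{iθ} - z) dθ = (b - a) + 2i·Log((1 - z e^{-ia})/(1 - z e^{-ib}))`. -/
theorem schwarz_integral_arc (a b : ℝ) (ha : 0 < a) (hab : a < b) (hb : b < 2 * π)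
    (z : ℂ) (hz : ‖z‖ < 1) :
    (∫ θ : ℝ in a..b,
        (Complex.exp (θ * Complex.I) + z) / (Complex.exp (θ * Complex.I) - z))
      = ((b : ℂ) - a) + 2 * Complex.I *
          Complex.log ((1 - z * Complex.exp (-(a : ℂ) * Complex.I)) /
            (1 - z * Complex.exp (-(b : ℂ) * Complex.I))) := by
  set g : ℝ → ℂ := fun θ => 1 - z * Complex.exp (-(θ : ℂ) * Complex.I) with hg
  have habs : ∀ θ : ℝ, ‖z * Complex.exp (-(θ : ℂ) * Complex.I)‖ < 1 := by
    intro θ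
    rw [norm_mul]
    have : ‖Complex.exp (-(θ : ℂ) * Complex.I)‖ = 1 := by
      rw [Complex.norm_exp]
      simp [Complex.mul_I_re]
    rw [this, mul_one]
    exact hz
  have hgre : ∀ θ : ℝ, 0 < (g θ).re := by
    intro θ
    have h1 : |(z * Complex.exp (-(θ : ℂ) * Complex.I)).re|
        ≤ ‖z * Complex.exp (-(θ : ℂ) * Complex.I)‖ := Complex.abs_re_le_norm _
    have := habs θ
    simp only [hg, Complex.sub_re, Complex.one_re]
    cases abs_le.mp h1 with
    | intro hl hr => linarith
  have hne : ∀ θ : ℝ, Complex.exp ((θ : ℂ) * Complex.I) - z ≠ 0 := by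
    intro θ h
    have : ‖Complex.exp ((θ : ℂ) * Complex.I)‖ = 1 := by
      rw [Complex.norm_exp]; simp [Complex.mul_I_re]
    rw [sub_eq_zero] at h
    rw [h] at this
    exact absurd this (by linarith)
  have hgne : ∀ θ : ℝ, g θ ≠ 0 := fun θ h => by
    have := hgre θ; rw [h] at this; simp at this
  -- derivative
  have hderiv : ∀ θ ∈ Set.uIcc a b,
      HasDerivAt (fun t : ℝ => (t : ℂ) - 2 * Complex.I * Complex.log (g t))
        ((Complex.exp ((θ : ℂ) * Complex.I) + z) / (Complex.exp ((θ : ℂ) * Complex.I) - z)) θ := by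
    intro θ _
    have hexp : HasDerivAt (fun t : ℝ => Complex.exp (-(t : ℂ) * Complex.I))
        (-Complex.I * Complex.exp (-(θ : ℂ) * Complex.I)) θ := by
      have h1 : HasDerivAt (fun t : ℂ => Complex.exp (-t * Complex.I))
          (Complex.exp (-(θ : ℂ) * Complex.I) * (-Complex.I)) (θ : ℂ) := by
        have := (Complex.hasDerivAt_exp (-(θ : ℂ) * Complex.I)).comp (θ : ℂ)
          (((hasDerivAt_id (θ : ℂ)).neg).mul_const Complex.I)
        simpa [Function.comp_def] using this
      simpa [mul_comm] using h1.comp_ofReal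
    have hgd : HasDerivAt g (-(z * (-Complex.I * Complex.exp (-(θ : ℂ) * Complex.I)))) θ := by
      have := (hexp.const_mul z).const_sub 1
      rw [hg]
      convert this using 2 <;> ring_nf
    have hlog : HasDerivAt (fun t : ℝ => Complex.log (g t))
        ((-(z * (-Complex.I * Complex.exp (-(θ : ℂ) * Complex.I)))) / g θ) θ :=
      hgd.clog_real (Or.inl (hgre θ))
    have hF : HasDerivAt (fun t : ℝ => (t : ℂ) - 2 * Complex.I * Complex.log (g t))
        (1 - 2 * Complex.I * ((-(z * (-Complex.I * Complex.exp (-(θ : ℂ) * Complex.I)))) / g θ)) θ := by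
      have hid : HasDerivAt (fun t : ℝ => (t : ℂ)) 1 θ := by simpa using (hasDerivAt_id θ).ofReal_comp
      exact hid.sub (hlog.const_mul (2 * Complex.I))
    convert hF using 1
    have hgθ : g θ = 1 - z * Complex.exp (-(θ : ℂ) * Complex.I) := rfl
    have hEn : Complex.exp (-(θ : ℂ) * Complex.I)
        = (Complex.exp ((θ : ℂ) * Complex.I))⁻¹ := by
      rw [← Complex.exp_neg]; ring_nf
    have h2 : 1 - z * (Complex.exp ((θ : ℂ) * Complex.I))⁻¹ ≠ 0 := by
      intro h
      apply hne θ
      field_simp at h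
      linear_combination h
    rw [hgθ, hEn]
    field_simp [Complex.exp_ne_zero, hne θ, h2]
    linear_combination (2*z) * Complex.I_sq
  -- integrability
  have hcont : ContinuousOn (fun θ : ℝ =>
      (Complex.exp ((θ : ℂ) * Complex.I) + z) / (Complex.exp ((θ : ℂ) * Complex.I) - z))
      (Set.uIcc a b) := by
    apply ContinuousOn.div
    · fun_prop
    · fun_prop
    · intro θ _; exact hne θ
  have key := intervalIntegral.integral_eq_sub_of_hasDerivAt hderiv
    (hcont.intervalIntegrable)
  rw [key]
  rw [log_div_pos_re (hgre a) (hgre b)]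
  ring
end

section
/- Let Γ = (α, β) be an open arc of the unit circle with normalized length m(Γ), and let ζ be a point of the unit circle not in the open arc (α, β). Then e^{−πi·m(Γ)} · (1 − ζ·conj(α)) / (1 − ζ·conj(β)) = |ζ − α| / |ζ − β|; in particular this quantity is real and positive. -/
open Complex Real

private lemma one_sub_exp_eq (θ : ℝ) :
    1 - Complex.exp ((θ : ℂ) * Complex.I) =
      Complex.exp (((θ / 2 : ℝ) : ℂ) * Complex.I) *
        (-2 * Complex.I * (Real.sin (θ / 2) : ℂ)) := by
  have h : Complex.exp ((θ : ℂ) * Complex.I)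
      = Complex.exp (((θ / 2 : ℝ) : ℂ) * Complex.I) *
          Complex.exp (((θ / 2 : ℝ) : ℂ) * Complex.I) := by
    rw [← Complex.exp_add]; push_cast; ring_nf
  rw [h, Complex.exp_mul_I, ← Complex.ofReal_cos, ← Complex.ofReal_sin]
  have pyth : (Real.cos (θ / 2) : ℂ) ^ 2 + (Real.sin (θ / 2) : ℂ) ^ 2 = 1 := by
    have := Real.cos_sq_add_sin_sq (θ / 2)
    exact_mod_cast congrArg (fun x : ℝ => (x : ℂ)) this
  linear_combination -pyth + ((Real.sin (θ / 2) : ℂ)) ^ 2 * Complex.I_sq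

private lemma abs_exp_sub_exp (x y : ℝ) :
    ‖Complex.exp ((x : ℂ) * Complex.I) - Complex.exp ((y : ℂ) * Complex.I)‖ =
      2 * |Real.sin ((x - y) / 2)| := by
  have hx : Complex.exp ((x : ℂ) * Complex.I)
      = Complex.exp ((y : ℂ) * Complex.I) * Complex.exp (((x - y : ℝ) : ℂ) * Complex.I) := by
    rw [← Complex.exp_add]; push_cast; ring_nf
  have h1 := one_sub_exp_eq (x - y)
  have h2 : Complex.exp ((x : ℂ) * Complex.I) - Complex.exp ((y : ℂ) * Complex.I)
      = Complex.exp ((y : ℂ) * Complex.I) *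
          Complex.exp ((((x - y) / 2 : ℝ) : ℂ) * Complex.I) *
          (2 * Complex.I * (Real.sin ((x - y) / 2) : ℂ)) := by
    rw [hx]; linear_combination (-Complex.exp ((y : ℂ) * Complex.I)) * h1
  rw [h2]
  simp only [norm_mul, Complex.norm_exp_ofReal_mul_I, Complex.norm_two, Complex.norm_I,
    Complex.norm_real, Real.norm_eq_abs, one_mul, mul_one]

/-- For an arc `Γ = (α, β)` of the unit circle (`α = e^{ia}`, `β = e^{ib}`,
`0 ≤ a < b < a + 2π`, `m(Γ) = (b - a)/(2π)`) and a point `ζ = e^{ic}` of the circle not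
in the open arc (`b < c ≤ a + 2π`, so in particular `ζ ≠ β`),
`e^{-πi·m(Γ)}·(1 - ζ·conj(α))/(1 - ζ·conj(β)) = |ζ - α|/|ζ - β|`;
in particular this quantity is real and nonnegative. -/
theorem arc_ratio_identity (a b c : ℝ) (ha : 0 ≤ a) (hab : a < b) (hb : b < a + 2 * π)
    (hbc : b < c) (hc : c ≤ a + 2 * π) :
    Complex.exp (-(π : ℂ) * Complex.I * (((b - a) / (2 * π) : ℝ) : ℂ)) *
        (1 - Complex.exp ((c : ℂ) * Complex.I) *
          (starRingEnd ℂ) (Complex.exp ((a : ℂ) * Complex.I))) /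
        (1 - Complex.exp ((c : ℂ) * Complex.I) *
          (starRingEnd ℂ) (Complex.exp ((b : ℂ) * Complex.I)))
      = ((‖Complex.exp ((c : ℂ) * Complex.I) - Complex.exp ((a : ℂ) * Complex.I)‖
          / ‖Complex.exp ((c : ℂ) * Complex.I) - Complex.exp ((b : ℂ) * Complex.I)‖ : ℝ) : ℂ) := by
  have hπ : (0 : ℝ) < π := Real.pi_pos
  set s1 := Real.sin ((c - a) / 2) with hs1def
  set s2 := Real.sin ((c - b) / 2) with hs2def
  have hs1 : 0 ≤ s1 := by
    apply Real.sin_nonneg_of_nonneg_of_le_pi <;> nlinarith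
  have hs2 : 0 < s2 := by
    apply Real.sin_pos_of_pos_of_lt_pi <;> nlinarith
  -- rewrite the conjugate products
  have hmul : ∀ t : ℝ, Complex.exp ((c : ℂ) * Complex.I) *
      (starRingEnd ℂ) (Complex.exp ((t : ℂ) * Complex.I))
      = Complex.exp (((c - t : ℝ) : ℂ) * Complex.I) := by
    intro t
    rw [← Complex.exp_conj, ← Complex.exp_add]
    congr 1
    simp [map_mul, Complex.conj_ofReal, Complex.conj_I]
    push_cast
    ring
  have hexp : Complex.exp (-(π : ℂ) * Complex.I * (((b - a) / (2 * π) : ℝ) : ℂ))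
      = Complex.exp ((((a - b) / 2 : ℝ) : ℂ) * Complex.I) := by
    have hπ' : (π : ℂ) ≠ 0 := by exact_mod_cast ne_of_gt hπ
    congr 1
    push_cast
    field_simp
    ring
  rw [hmul a, hmul b, hexp, one_sub_exp_eq, one_sub_exp_eq,
    abs_exp_sub_exp, abs_exp_sub_exp, ← hs1def, ← hs2def]
  have hE : Complex.exp ((((a - b) / 2 : ℝ) : ℂ) * Complex.I) *
      Complex.exp ((((c - a) / 2 : ℝ) : ℂ) * Complex.I)
      = Complex.exp ((((c - b) / 2 : ℝ) : ℂ) * Complex.I) := by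
    rw [← Complex.exp_add]; congr 1; push_cast; ring
  have hEne : Complex.exp ((((c - b) / 2 : ℝ) : ℂ) * Complex.I) ≠ 0 := Complex.exp_ne_zero _
  have hs2ne : (s2 : ℂ) ≠ 0 := by exact_mod_cast ne_of_gt hs2
  rw [_root_.abs_of_nonneg hs1, _root_.abs_of_pos hs2]
  push_cast
  have hd1 : Complex.exp ((((c - b) / 2 : ℝ) : ℂ) * Complex.I) * (-2 * Complex.I * (s2 : ℂ)) ≠ 0 := by
    apply mul_ne_zero hEne
    apply mul_ne_zero _ hs2ne
    simp [Complex.I_ne_zero]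
  have hd2 : (2 : ℂ) * (s2 : ℂ) ≠ 0 := mul_ne_zero two_ne_zero hs2ne
  push_cast at hE hd1 ⊢
  rw [div_eq_div_iff hd1 hd2]
  linear_combination (-4 * Complex.I * (s1 : ℂ) * (s2 : ℂ)) * hE
end
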